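/- Let K > 0 and 0 < b < 1 be real numbers. Then for every real x, the function t ↦ K^{1-(b+it)} · e^{(b+it)x} / ((b+it)(b+it-1)) is Lebesgue integrable over ℝ and (1/(2π)) · ∫_{-∞}^{∞} K^{1-(b+it)} · e^{(b+it)x} / ((b+it)(b+it-1)) dt = max(e^x - K, 0) - e^x, where i is the imaginary unit and the left-hand side is a complex integral whose value is the real number on the right. -/

import Mathlib

open MeasureTheory Complex Set Filter Topology intervalIntegral FourierTransform

lemma integrableOn_cexp_Iic {c : ℂ} (hc : 0 < c.re) (y : ℝ) :
    IntegrableOn (fun v : ℝ => Complex.exp (c * v)) (Iic y) := by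
  refine (integrableOn_exp_mul_Iic hc y).mono' ?_ ?_
  · exact (Complex.continuous_exp.comp (continuous_const.mul Complex.continuous_ofReal)).aestronglyMeasurable
  · filter_upwards with v
    simp [Complex.norm_exp]

lemma integrableOn_cexp_Ioi {c : ℂ} (hc : c.re < 0) (y : ℝ) :
    IntegrableOn (fun v : ℝ => Complex.exp (c * v)) (Ioi y) := by
  refine (exp_neg_integrableOn_Ioi y (by linarith : (0:ℝ) < -c.re)).mono' ?_ ?_
  · exact (Complex.continuous_exp.comp (continuous_const.mul Complex.continuous_ofReal)).aestronglyMeasurable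
  · filter_upwards with v
    simp [Complex.norm_exp]

lemma tendsto_cexp_atBot {c : ℂ} (hc : 0 < c.re) :
    Tendsto (fun i : ℝ => Complex.exp (c * i)) atBot (nhds 0) := by
  rw [tendsto_zero_iff_norm_tendsto_zero]
  have h1 : Tendsto (fun i : ℝ => c.re * i) atBot atBot :=
    tendsto_id.const_mul_atBot hc
  have := Real.tendsto_exp_atBot.comp h1
  refine this.congr fun i => ?_
  simp [Complex.norm_exp]

lemma integral_cexp_Iic {c : ℂ} (hc : 0 < c.re) (y : ℝ) :
    ∫ v in Iic y, Complex.exp (c * v) = Complex.exp (c * y) / c := by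
  have hc0 : c ≠ 0 := fun h => by simp [h] at hc
  refine tendsto_nhds_unique
    (intervalIntegral_tendsto_integral_Iic y (integrableOn_cexp_Iic hc y) tendsto_id) ?_
  have : ∀ i : ℝ, (∫ x in i..y, Complex.exp (c * x)) = (Complex.exp (c * y) - Complex.exp (c * i)) / c :=
    fun i => integral_exp_mul_complex hc0
  simp_rw [this]
  have := ((tendsto_cexp_atBot hc).const_sub (Complex.exp (c * y))).div_const c
  simpa using this

lemma integral_cexp_Ioi {c : ℂ} (hc : c.re < 0) (y : ℝ) :
    ∫ v in Ioi y, Complex.exp (c * v) = -(Complex.exp (c * y) / c) := by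
  have hc0 : c ≠ 0 := fun h => by simp [h] at hc
  refine tendsto_nhds_unique
    (intervalIntegral_tendsto_integral_Ioi y (integrableOn_cexp_Ioi hc y) tendsto_id) ?_
  have h1 : Tendsto (fun i : ℝ => Complex.exp (c * i)) atTop (nhds 0) := by
    rw [tendsto_zero_iff_norm_tendsto_zero]
    have h1 : Tendsto (fun i : ℝ => c.re * i) atTop atBot :=
      tendsto_id.const_mul_atTop_of_neg hc
    have := Real.tendsto_exp_atBot.comp h1
    refine this.congr fun i => ?_
    simp [Complex.norm_exp]
  have : ∀ i : ℝ, (∫ x in y..i, Complex.exp (c * x)) = (Complex.exp (c * i) - Complex.exp (c * y)) / c :=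
    fun i => integral_exp_mul_complex hc0
  simp_rw [this]
  have := (h1.sub_const (Complex.exp (c * y))).div_const c
  simpa [neg_div] using this

section aux
variable {K b : ℝ}

lemma abs_lower₁ (hb0 : 0 < b) (hb1 : b < 1) (t : ℝ) :
    b * Real.sqrt (1 + t^2) ≤ ‖(b:ℂ) + t*Complex.I‖ := by
  have h : ‖(b:ℂ) + t*Complex.I‖ = Real.sqrt (b^2 + t^2) := by
    rw [Complex.norm_def]; simp [Complex.normSq_apply]; ring_nf
  rw [h, show b * Real.sqrt (1+t^2) = Real.sqrt (b^2 * (1+t^2)) by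
    rw [Real.sqrt_mul (sq_nonneg b), Real.sqrt_sq hb0.le]]
  apply Real.sqrt_le_sqrt
  nlinarith [mul_nonneg (sq_nonneg t) (by nlinarith : (0:ℝ) ≤ 1 - b^2)]

lemma abs_lower₂ (hb0 : 0 < b) (hb1 : b < 1) (t : ℝ) :
    (1-b) * Real.sqrt (1 + t^2) ≤ ‖((b:ℂ) + t*Complex.I) - 1‖ := by
  have e : ((b:ℂ) + t*Complex.I) - 1 = ((b-1:ℝ):ℂ) + t*Complex.I := by push_cast; ring
  have h : ‖((b-1:ℝ):ℂ) + t*Complex.I‖ = Real.sqrt ((b-1)^2 + t^2) := by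
    rw [Complex.norm_def]; simp [Complex.normSq_apply]; ring_nf
  rw [e, h, show (1-b) * Real.sqrt (1+t^2) = Real.sqrt ((1-b)^2 * (1+t^2)) by
    rw [Real.sqrt_mul (sq_nonneg (1-b)), Real.sqrt_sq (by linarith)]]
  apply Real.sqrt_le_sqrt
  nlinarith [mul_nonneg (sq_nonneg t) (by nlinarith : (0:ℝ) ≤ 1 - (1-b)^2)]

lemma denom_lower (hb0 : 0 < b) (hb1 : b < 1) (t : ℝ) :
    b * (1-b) * (1 + t^2) ≤
      ‖(b:ℂ) + t*Complex.I‖ * ‖((b:ℂ) + t*Complex.I) - 1‖ := by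
  have h1 := abs_lower₁ hb0 hb1 t
  have h2 := abs_lower₂ hb0 hb1 t
  have hs : Real.sqrt (1+t^2) * Real.sqrt (1+t^2) = 1 + t^2 :=
    Real.mul_self_sqrt (by positivity)
  calc b * (1-b) * (1+t^2) = (b * Real.sqrt (1+t^2)) * ((1-b) * Real.sqrt (1+t^2)) := by
        rw [show (b * Real.sqrt (1+t^2)) * ((1-b) * Real.sqrt (1+t^2))
            = b * (1-b) * (Real.sqrt (1+t^2) * Real.sqrt (1+t^2)) by ring, hs]
    _ ≤ _ := by
        apply mul_le_mul h1 h2 (by nlinarith [Real.sqrt_nonneg (1+t^2)]) (norm_nonneg _)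

lemma norm_integrand_le (hK : 0 < K) (hb0 : 0 < b) (hb1 : b < 1) (x t : ℝ) :
    ‖(K : ℂ) ^ ((1 : ℂ) - ((b : ℂ) + t * Complex.I)) *
        Complex.exp (((b : ℂ) + t * Complex.I) * x) /
        (((b : ℂ) + t * Complex.I) * (((b : ℂ) + t * Complex.I) - 1))‖ ≤
      (Real.exp (Real.log K * (1-b)) * Real.exp (b*x) / (b*(1-b))) * (1+t^2)⁻¹ := by
  have hKC : (K:ℂ) ≠ 0 := by exact_mod_cast hK.ne'
  have hcpow : (K:ℂ) ^ ((1 : ℂ) - ((b : ℂ) + t * Complex.I))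
      = Complex.exp ((Real.log K : ℂ) * ((1 : ℂ) - ((b : ℂ) + t * Complex.I))) := by
    rw [Complex.cpow_def_of_ne_zero hKC, Complex.ofReal_log hK.le]
  rw [hcpow, norm_div, norm_mul, norm_mul, Complex.norm_exp, Complex.norm_exp]
  have e1 : ((Real.log K : ℂ) * ((1 : ℂ) - ((b : ℂ) + t * Complex.I))).re
      = Real.log K * (1-b) := by simp
  have e2 : (((b : ℂ) + t * Complex.I) * (x:ℂ)).re = b * x := by simp
  rw [e1, e2]
  have hD := denom_lower hb0 hb1 t
  have h1b : (0:ℝ) < 1 - b := by linarith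
  have hDpos : 0 < b * (1-b) * (1+t^2) := by positivity
  have hN : (0:ℝ) ≤ Real.exp (Real.log K * (1-b)) * Real.exp (b*x) := by positivity
  have step1 : Real.exp (Real.log K * (1-b)) * Real.exp (b*x) /
        (‖(b:ℂ) + t*Complex.I‖ * ‖((b:ℂ) + t*Complex.I) - 1‖)
      ≤ Real.exp (Real.log K * (1-b)) * Real.exp (b*x) / (b * (1-b) * (1+t^2)) :=
    div_le_div_of_nonneg_left hN hDpos hD
  refine step1.trans_eq ?_
  field_simp

end aux

section main
variable {K b : ℝ}

lemma integrand_integrable (hK : 0 < K) (hb0 : 0 < b) (hb1 : b < 1) (x : ℝ) :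
    Integrable (fun t : ℝ =>
      (K : ℂ) ^ ((1 : ℂ) - ((b : ℂ) + t * Complex.I)) *
        Complex.exp (((b : ℂ) + t * Complex.I) * x) /
        (((b : ℂ) + t * Complex.I) * (((b : ℂ) + t * Complex.I) - 1))) := by
  have hKC : (K:ℂ) ≠ 0 := by exact_mod_cast hK.ne'
  have hcont_c : Continuous (fun t : ℝ => (b:ℂ) + t*Complex.I) :=
    continuous_const.add (Complex.continuous_ofReal.mul continuous_const)
  have hne0 : ∀ t : ℝ, ((b:ℂ) + t*Complex.I) ≠ 0 := by
    intro t h; have := congrArg Complex.re h; simp at this; linarith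
  have hne1 : ∀ t : ℝ, ((b:ℂ) + t*Complex.I) - 1 ≠ 0 := by
    intro t h; have := congrArg Complex.re h; simp at this; linarith
  have hcont : Continuous (fun t : ℝ =>
      (K : ℂ) ^ ((1 : ℂ) - ((b : ℂ) + t * Complex.I)) *
        Complex.exp (((b : ℂ) + t * Complex.I) * x) /
        (((b : ℂ) + t * Complex.I) * (((b : ℂ) + t * Complex.I) - 1))) := by
    apply Continuous.div
    · exact (((continuous_const.sub hcont_c).const_cpow (Or.inl hKC))).mul
        ((hcont_c.mul continuous_const).cexp)
    · exact hcont_c.mul (hcont_c.sub continuous_const)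
    · exact fun t => mul_ne_zero (hne0 t) (hne1 t)
  refine Integrable.mono' ((integrable_inv_one_add_sq).const_mul
    (Real.exp (Real.log K * (1-b)) * Real.exp (b*x) / (b*(1-b)))) hcont.aestronglyMeasurable ?_
  filter_upwards with t
  simpa using norm_integrand_le hK hb0 hb1 x t

end main
lemma combo (c L X : ℂ) (hc : c ≠ 0) (hc1 : c - 1 ≠ 0) :
    (-(cexp L)) * (cexp (c * (X - L))/c) +
      (-(cexp L) * cexp (X - L)) * (-(cexp ((c-1)*(X-L))/(c-1)))
    = cexp (L * (1 - c)) * cexp (c * X) / (c * (c-1)) := by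
  field_simp
  have e1 : L + c*(X-L) = L*(1 - c)+c*X := by ring
  have e2 : L + (X-L) + (c-1)*(X-L) = L*(1 - c)+c*X := by ring
  have h3 : cexp (X - L) * cexp ((X - L) * (c - 1)) = cexp (c * (X - L)) := by
    rw [← Complex.exp_add]; ring_nf
  have h4 : cexp L * cexp (c * (X - L)) = cexp (L * (1 - c) + c * X) := by
    rw [← Complex.exp_add, e1]
  have h5 : cexp (L * (1 - c) + c * X) = cexp (L * (1 - c)) * cexp (c * X) := Complex.exp_add _ _
  linear_combination (c * cexp L) * h3 + h4 + h5

lemma key {K b : ℝ} (hK : 0 < K) (hb0 : 0 < b) (hb1 : b < 1) (x t : ℝ) :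
    (∫ v : ℝ, Complex.exp ((↑(v * t)) * Complex.I) *
      (↑(-(K * Real.exp (b * v + min (x - Real.log K - v) 0))) : ℂ))
    = (K : ℂ) ^ ((1 : ℂ) - ((b : ℂ) + t * Complex.I)) *
        Complex.exp (((b : ℂ) + t * Complex.I) * x) /
        (((b : ℂ) + t * Complex.I) * (((b : ℂ) + t * Complex.I) - 1)) := by
  have hKC : (K:ℂ) ≠ 0 := by exact_mod_cast hK.ne'
  set y : ℝ := x - Real.log K with hy_def
  set c : ℂ := (b:ℂ) + t*Complex.I with hc_def
  have hcre : 0 < c.re := by simp [hc_def]; exact hb0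
  have hc1re : (c - 1).re < 0 := by simp [hc_def]; linarith
  have hc : c ≠ 0 := fun h => by rw [h] at hcre; simp at hcre
  have hc1 : c - 1 ≠ 0 := fun h => by rw [h] at hc1re; simp at hc1re
  have eq1 : Set.EqOn (fun v : ℝ => (-(K:ℂ)) * Complex.exp (c * v))
      (fun v : ℝ => Complex.exp ((↑(v * t)) * Complex.I) *
        (↑(-(K * Real.exp (b * v + min (x - Real.log K - v) 0))) : ℂ)) (Iic y) := by
    intro v hv
    have hmin : min (x - Real.log K - v) 0 = 0 :=
      min_eq_right (by simp only [mem_Iic, hy_def] at hv ⊢; linarith)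
    have hcast : (↑(-(K * Real.exp (b*v))) : ℂ) = -(K:ℂ) * Complex.exp (((b*v : ℝ):ℂ)) := by
      push_cast; ring
    have hexp : c * (v:ℂ) = ((b*v : ℝ):ℂ) + ((v*t : ℝ):ℂ)*Complex.I := by
      rw [hc_def]; push_cast; ring
    show (-(K:ℂ)) * Complex.exp (c * v)
        = Complex.exp ((↑(v * t)) * Complex.I) * ↑(-(K * Real.exp (b * v + min (x - Real.log K - v) 0)))
    rw [hmin, add_zero, hcast, hexp, Complex.exp_add]
    ring
  have eq2 : Set.EqOn (fun v : ℝ => (-(K:ℂ) * Complex.exp (((y:ℝ):ℂ))) * Complex.exp ((c-1) * v))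
      (fun v : ℝ => Complex.exp ((↑(v * t)) * Complex.I) *
        (↑(-(K * Real.exp (b * v + min (x - Real.log K - v) 0))) : ℂ)) (Ioi y) := by
    intro v hv
    have hmin : min (x - Real.log K - v) 0 = x - Real.log K - v :=
      min_eq_left (by simp only [mem_Ioi, hy_def] at hv ⊢; linarith)
    have hcast : (↑(-(K * Real.exp (b*v + (x - Real.log K - v)))) : ℂ)
        = -(K:ℂ) * Complex.exp (((b*v + (x - Real.log K - v) : ℝ):ℂ)) := by
      push_cast; ring
    have hexp : ((y:ℝ):ℂ) + (c - 1) * (v:ℂ)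
        = ((b*v + (x - Real.log K - v) : ℝ):ℂ) + ((v*t : ℝ):ℂ)*Complex.I := by
      rw [hc_def, hy_def]; push_cast; ring
    show (-(K:ℂ) * Complex.exp (((y:ℝ):ℂ))) * Complex.exp ((c-1) * v)
        = Complex.exp ((↑(v * t)) * Complex.I) * ↑(-(K * Real.exp (b * v + min (x - Real.log K - v) 0)))
    rw [hmin, neg_mul, neg_mul, mul_assoc, ← Complex.exp_add, hexp, Complex.exp_add, hcast]
    ring
  have hIic : IntegrableOn (fun v : ℝ => Complex.exp ((↑(v * t)) * Complex.I) *
      (↑(-(K * Real.exp (b * v + min (x - Real.log K - v) 0))) : ℂ)) (Iic y) :=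
    MeasureTheory.IntegrableOn.congr_fun
      ((integrableOn_cexp_Iic hcre y).const_mul (-(K:ℂ))) eq1 measurableSet_Iic
  have hIoi : IntegrableOn (fun v : ℝ => Complex.exp ((↑(v * t)) * Complex.I) *
      (↑(-(K * Real.exp (b * v + min (x - Real.log K - v) 0))) : ℂ)) (Ioi y) :=
    MeasureTheory.IntegrableOn.congr_fun
      ((integrableOn_cexp_Ioi hc1re y).const_mul (-(K:ℂ) * Complex.exp (((y:ℝ):ℂ))))
      eq2 measurableSet_Ioi
  rw [← intervalIntegral.integral_Iic_add_Ioi hIic hIoi,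
    setIntegral_congr_fun measurableSet_Iic eq1.symm,
    setIntegral_congr_fun measurableSet_Ioi eq2.symm,
    MeasureTheory.integral_const_mul, MeasureTheory.integral_const_mul, integral_cexp_Iic hcre, integral_cexp_Ioi hc1re]
  have hcpow : (K:ℂ) ^ ((1 : ℂ) - c)
      = Complex.exp (((Real.log K : ℝ):ℂ) * ((1 : ℂ) - c)) := by
    rw [Complex.cpow_def_of_ne_zero hKC, Complex.ofReal_log hK.le]
  have eK : (K:ℂ) = Complex.exp (((Real.log K : ℝ):ℂ)) := by
    rw [← Complex.ofReal_exp, Real.exp_log hK]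
  have hyC : ((y:ℝ):ℂ) = (x:ℂ) - ((Real.log K : ℝ):ℂ) := by
    rw [hy_def]; push_cast; ring
  rw [hcpow, eK, hyC]
  exact combo c ((Real.log K : ℝ):ℂ) (x:ℂ) hc hc1

lemma lhs_integrable {K b : ℝ} (hK : 0 < K) (hb0 : 0 < b) (hb1 : b < 1) (x t : ℝ) :
    Integrable (fun v : ℝ => Complex.exp ((↑(v * t)) * Complex.I) *
      (↑(-(K * Real.exp (b * v + min (x - Real.log K - v) 0))) : ℂ)) := by
  set y : ℝ := x - Real.log K with hy_def
  set c : ℂ := (b:ℂ) + t*Complex.I with hc_def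
  have hcre : 0 < c.re := by simp [hc_def]; exact hb0
  have hc1re : (c - 1).re < 0 := by simp [hc_def]; linarith
  have eq1 : Set.EqOn (fun v : ℝ => (-(K:ℂ)) * Complex.exp (c * v))
      (fun v : ℝ => Complex.exp ((↑(v * t)) * Complex.I) *
        (↑(-(K * Real.exp (b * v + min (x - Real.log K - v) 0))) : ℂ)) (Iic y) := by
    intro v hv
    have hmin : min (x - Real.log K - v) 0 = 0 :=
      min_eq_right (by simp only [mem_Iic, hy_def] at hv ⊢; linarith)
    have hcast : (↑(-(K * Real.exp (b*v))) : ℂ) = -(K:ℂ) * Complex.exp (((b*v : ℝ):ℂ)) := by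
      push_cast; ring
    have hexp : c * (v:ℂ) = ((b*v : ℝ):ℂ) + ((v*t : ℝ):ℂ)*Complex.I := by
      rw [hc_def]; push_cast; ring
    show (-(K:ℂ)) * Complex.exp (c * v)
        = Complex.exp ((↑(v * t)) * Complex.I) * ↑(-(K * Real.exp (b * v + min (x - Real.log K - v) 0)))
    rw [hmin, add_zero, hcast, hexp, Complex.exp_add]
    ring
  have eq2 : Set.EqOn (fun v : ℝ => (-(K:ℂ) * Complex.exp (((y:ℝ):ℂ))) * Complex.exp ((c-1) * v))
      (fun v : ℝ => Complex.exp ((↑(v * t)) * Complex.I) *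
        (↑(-(K * Real.exp (b * v + min (x - Real.log K - v) 0))) : ℂ)) (Ioi y) := by
    intro v hv
    have hmin : min (x - Real.log K - v) 0 = x - Real.log K - v :=
      min_eq_left (by simp only [mem_Ioi, hy_def] at hv ⊢; linarith)
    have hcast : (↑(-(K * Real.exp (b*v + (x - Real.log K - v)))) : ℂ)
        = -(K:ℂ) * Complex.exp (((b*v + (x - Real.log K - v) : ℝ):ℂ)) := by
      push_cast; ring
    have hexp : ((y:ℝ):ℂ) + (c - 1) * (v:ℂ)
        = ((b*v + (x - Real.log K - v) : ℝ):ℂ) + ((v*t : ℝ):ℂ)*Complex.I := by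
      rw [hc_def, hy_def]; push_cast; ring
    show (-(K:ℂ) * Complex.exp (((y:ℝ):ℂ))) * Complex.exp ((c-1) * v)
        = Complex.exp ((↑(v * t)) * Complex.I) * ↑(-(K * Real.exp (b * v + min (x - Real.log K - v) 0)))
    rw [hmin, neg_mul, neg_mul, mul_assoc, ← Complex.exp_add, hexp, Complex.exp_add, hcast]
    ring
  have hIic : IntegrableOn (fun v : ℝ => Complex.exp ((↑(v * t)) * Complex.I) *
      (↑(-(K * Real.exp (b * v + min (x - Real.log K - v) 0))) : ℂ)) (Iic y) :=
    MeasureTheory.IntegrableOn.congr_fun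
      ((integrableOn_cexp_Iic hcre y).const_mul (-(K:ℂ))) eq1 measurableSet_Iic
  have hIoi : IntegrableOn (fun v : ℝ => Complex.exp ((↑(v * t)) * Complex.I) *
      (↑(-(K * Real.exp (b * v + min (x - Real.log K - v) 0))) : ℂ)) (Ioi y) :=
    MeasureTheory.IntegrableOn.congr_fun
      ((integrableOn_cexp_Ioi hc1re y).const_mul (-(K:ℂ) * Complex.exp (((y:ℝ):ℂ))))
      eq2 measurableSet_Ioi
  rw [← integrableOn_univ, ← Set.Iic_union_Ioi (a := y)]
  exact hIic.union hIoi

/-- Bromwich inversion for the covered-call payoff: for `K > 0`, `0 < b < 1` and every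
real `x`, `(1/(2π)) ∫ K^{1-(b+it)} e^{(b+it)x} / ((b+it)(b+it-1)) dt = (e^x - K)_+ - e^x`. -/
theorem covered_call_payoff_laplace_inversion (K b : ℝ) (hK : 0 < K)
    (hb0 : 0 < b) (hb1 : b < 1) (x : ℝ) :
    Integrable (fun t : ℝ =>
      (K : ℂ) ^ ((1 : ℂ) - ((b : ℂ) + t * Complex.I)) *
        Complex.exp (((b : ℂ) + t * Complex.I) * x) /
        (((b : ℂ) + t * Complex.I) * (((b : ℂ) + t * Complex.I) - 1))) ∧
    (1 / (2 * Real.pi) : ℂ) * ∫ t : ℝ,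
        (K : ℂ) ^ ((1 : ℂ) - ((b : ℂ) + t * Complex.I)) *
          Complex.exp (((b : ℂ) + t * Complex.I) * x) /
          (((b : ℂ) + t * Complex.I) * (((b : ℂ) + t * Complex.I) - 1))
      = ((max (Real.exp x - K) 0 - Real.exp x : ℝ) : ℂ) := by
  have hInt := integrand_integrable hK hb0 hb1 x
  refine ⟨hInt, ?_⟩
  set G : ℝ → ℂ := fun t : ℝ =>
      (K : ℂ) ^ ((1 : ℂ) - ((b : ℂ) + t * Complex.I)) *
        Complex.exp (((b : ℂ) + t * Complex.I) * x) /
        (((b : ℂ) + t * Complex.I) * (((b : ℂ) + t * Complex.I) - 1)) with hG_def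
  set F : ℝ → ℂ := fun v : ℝ =>
      (↑(-(K * Real.exp (b * v + min (x - Real.log K - v) 0))) : ℂ) with hF_def
  have hπ : (0:ℝ) < 2 * Real.pi := by positivity
  have hFcont : Continuous F := by
    apply Complex.continuous_ofReal.comp
    exact (continuous_const.mul (Real.continuous_exp.comp ((continuous_const.mul continuous_id).add
      ((continuous_const.sub continuous_id).min continuous_const)))).neg
  have hF_int : Integrable F := by
    refine (lhs_integrable hK hb0 hb1 x 0).congr ?_
    filter_upwards with v
    simp [hF_def]
  have hFT : 𝓕 F = fun ξ : ℝ => G (-(2*Real.pi*ξ)) := by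
    funext ξ
    rw [Real.fourier_eq']
    simp only [hG_def]
    rw [← key hK hb0 hb1 x (-(2*Real.pi*ξ))]
    simp only [hF_def]
    congr 1
    funext v
    rw [smul_eq_mul]
    congr 2
    have hi : (inner ℝ v ξ : ℝ) = v * ξ := by simp [RCLike.inner_apply]; ring
    rw [hi]
    push_cast
    ring
  have h𝓕int : Integrable (𝓕 F) := by
    rw [hFT]
    have h0 : (-(2*Real.pi)) ≠ 0 := neg_ne_zero.2 (by positivity)
    have := hInt.comp_mul_left' (R := -(2*Real.pi)) h0
    simpa [neg_mul] using this
  have hinv := hF_int.fourierInv_fourier_eq h𝓕int (hFcont.continuousAt (x := (0:ℝ)))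
  rw [Real.fourierInv_eq'] at hinv
  simp only [inner_zero_right, mul_zero, Complex.ofReal_zero, zero_mul, Complex.exp_zero,
    one_smul] at hinv
  rw [hFT] at hinv
  have hcv := MeasureTheory.Measure.integral_comp_mul_left G (-(2*Real.pi))
  have habs : |(-(2*Real.pi))⁻¹| = (2*Real.pi)⁻¹ := by
    rw [abs_inv, abs_neg, abs_of_pos hπ]
  rw [habs] at hcv
  have hinv2 : ((2*Real.pi)⁻¹ : ℝ) • (∫ t : ℝ, G t) = F 0 := by
    rw [← hcv, ← hinv]
    congr 1
    funext v
    congr 1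
    ring
  have hF0 : -(K * Real.exp (b * 0 + min (x - Real.log K - 0) 0))
      = max (Real.exp x - K) 0 - Real.exp x := by
    rcases le_or_gt x (Real.log K) with h|h
    · have h1 : min (x - Real.log K - 0) 0 = x - Real.log K := by
        rw [sub_zero]; exact min_eq_left (by linarith)
      have h2 : max (Real.exp x - K) 0 = 0 := max_eq_right (by
        have := (Real.exp_le_exp.2 h).trans_eq (Real.exp_log hK)
        linarith)
      rw [h1, h2]
      have h3 : b * 0 + (x - Real.log K) = x - Real.log K := by ring
      rw [h3, Real.exp_sub, Real.exp_log hK]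
      field_simp; ring
    · have h1 : min (x - Real.log K - 0) 0 = 0 := min_eq_right (by linarith)
      have h2 : max (Real.exp x - K) 0 = Real.exp x - K := max_eq_left (by
        have := (Real.exp_le_exp.2 h.le).trans_eq' (Real.exp_log hK)
        linarith)
      rw [h1, h2]
      simp
  have hFF : F 0 = ((max (Real.exp x - K) 0 - Real.exp x : ℝ) : ℂ) := by
    show ((-(K * Real.exp (b * 0 + min (x - Real.log K - 0) 0)) : ℝ) : ℂ) = _
    exact congrArg _ hF0
  rw [hFF] at hinv2
  rw [← hinv2]
  rw [Complex.real_smul]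
  congr 1
  push_cast
  rw [one_div]
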